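/- Let G be a simple connected graph and let v_i, v_j be adjacent vertices. Then LE_G(v_i) · LE_G(v_j) ≥ 1 and LE_G(v_i) + LE_G(v_j) ≥ 2. -/

import Mathlib

open Matrix BigOperators Finset

/-- The absolute value of a real matrix `B`, defined as `(B * Bᵀ)^(1/2)`. -/
noncomputable def matAbs {n : ℕ} (B : Matrix (Fin n) (Fin n) ℝ) : Matrix (Fin n) (Fin n) ℝ :=
  let hA : (B * Bᵀ).PosSemidef := Matrix.conjTranspose_eq_transpose_of_trivial B ▸
    Matrix.posSemidef_self_mul_conjTranspose B
  (hA.1.eigenvectorUnitary : Matrix (Fin n) (Fin n) ℝ) *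
    diagonal ((↑) ∘ (fun x : ℝ => √x) ∘ hA.1.eigenvalues) *
    (star hA.1.eigenvectorUnitary : Matrix (Fin n) (Fin n) ℝ)

/-- The (adjacency) energy of the vertex `i` of the graph `G`: `|A|_{ii}`. -/
noncomputable def vertexEnergy {n : ℕ} (G : SimpleGraph (Fin n)) [DecidableRel G.Adj]
    (i : Fin n) : ℝ :=
  matAbs (G.adjMatrix ℝ) i i

/-- The Laplacian energy of the vertex `i` of the graph `G`: `(|L - (2m/n) I|)_{ii}`. -/
noncomputable def vertexLapEnergy {n : ℕ} (G : SimpleGraph (Fin n)) [DecidableRel G.Adj]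
    (i : Fin n) : ℝ :=
  matAbs (G.lapMatrix ℝ - ((2 * (G.edgeFinset.card : ℝ)) / n) • 1) i i

/-- The normalized Laplacian `𝓛 = I - D^{-1/2} A D^{-1/2}` of the graph `G`. -/
noncomputable def normLap {n : ℕ} (G : SimpleGraph (Fin n)) [DecidableRel G.Adj] :
    Matrix (Fin n) (Fin n) ℝ :=
  1 - Matrix.diagonal (fun i => (Real.sqrt (G.degree i))⁻¹) * G.adjMatrix ℝ *
      Matrix.diagonal (fun i => (Real.sqrt (G.degree i))⁻¹)

/-- The normalized Laplacian energy of the vertex `i` of the graph `G`: `(|𝓛 - I|)_{ii}`. -/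
noncomputable def vertexNormLapEnergy {n : ℕ} (G : SimpleGraph (Fin n)) [DecidableRel G.Adj]
    (i : Fin n) : ℝ :=
  matAbs (normLap G - 1) i i

/-- If `u² ≤ v²` and `0 ≤ v` then `u ≤ v`. -/
lemma sq_le_imp (u v : ℝ) (hv : 0 ≤ v) (h : u^2 ≤ v^2) : u ≤ v := by nlinarith

/-- A real positive semidefinite matrix has nonnegative diagonal. -/
lemma psd_diag_nonneg {n : ℕ} {M : Matrix (Fin n) (Fin n) ℝ} (hM : M.PosSemidef)
    (i : Fin n) : 0 ≤ M i i := by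
  have h := hM.dotProduct_mulVec_nonneg (Pi.single i 1)
  simpa [mulVec_single_one, single_dotProduct] using h

/-- 2×2 principal minor inequality for a real positive semidefinite matrix. -/
lemma psd_entry_sq_le {n : ℕ} {M : Matrix (Fin n) (Fin n) ℝ} (hM : M.PosSemidef)
    (i j : Fin n) : M i j ^ 2 ≤ M i i * M j j := by
  have hsym : M j i = M i j := by
    have h := congr_fun (congr_fun hM.1 i) j
    simpa [Matrix.conjTranspose_apply] using h
  have key : ∀ t : ℝ, 0 ≤ M i i * (t * t) + (2 * M i j) * t + M j j := by
    intro t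
    have h := hM.dotProduct_mulVec_nonneg (t • (Pi.single i 1 : Fin n → ℝ) + Pi.single j 1)
    simp only [star_trivial, mulVec_add, mulVec_smul, mulVec_single_one, dotProduct_add,
      add_dotProduct, smul_dotProduct, dotProduct_smul, single_dotProduct, smul_eq_mul,
      one_mul, Pi.add_apply, Pi.smul_apply, transpose_apply, Matrix.col_apply] at h
    rw [hsym] at h
    nlinarith [h]
  have hd := discrim_le_zero key
  rw [discrim] at hd
  nlinarith [hd]

/-- For a real symmetric matrix `B`, its absolute value `|B|` is positive semidefinite, and
so are `|B| - B` and `|B| + B`. -/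
lemma matAbs_parts {n : ℕ} {B : Matrix (Fin n) (Fin n) ℝ} (hB : B.IsHermitian) :
    (matAbs B).PosSemidef ∧ (matAbs B - B).PosSemidef ∧ (matAbs B + B).PosSemidef := by
  obtain ⟨U, d, hUU, hspec⟩ : ∃ (U : Matrix (Fin n) (Fin n) ℝ) (d : Fin n → ℝ),
      star U * U = 1 ∧ B = U * diagonal d * star U :=
    ⟨hB.eigenvectorUnitary, hB.eigenvalues, Unitary.coe_star_mul_self _,
      by simpa using hB.spectral_theorem⟩
  have key : ∀ f : Fin n → ℝ, (∀ k, 0 ≤ f k) →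
      (U * diagonal f * star U).PosSemidef := by
    intro f hf
    rw [star_eq_conjTranspose]
    exact (posSemidef_diagonal_iff.mpr hf).mul_mul_conjTranspose_same U
  have reassoc : ∀ D1 D2 : Matrix (Fin n) (Fin n) ℝ,
      (U * D1 * star U) * (U * D2 * star U) = U * (D1 * (star U * U) * D2) * star U := by
    intro D1 D2; simp only [mul_assoc]
  set T := U * diagonal (fun k => |d k|) * star U with hTdef
  have hT : T.PosSemidef := key _ fun k => abs_nonneg _
  have hBt : Bᵀ = B := by
    have := hB.eq
    rwa [conjTranspose_eq_transpose_of_trivial] at this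
  have hDD : diagonal (fun k => |d k|) * diagonal (fun k => |d k|)
      = diagonal d * diagonal d := by
    simp only [diagonal_mul_diagonal]
    have h2 : (fun i => |d i| * |d i|) = fun i => d i * d i :=
      funext fun k => abs_mul_abs_self (d k)
    rw [h2]
  have hT2 : T ^ 2 = B * Bᵀ := by
    rw [hBt, pow_two, hTdef, hspec, reassoc, reassoc, hUU]
    simp only [mul_one]
    rw [hDD]
  have habs : matAbs B = T := by
    have hP : (B * Bᵀ).PosSemidef := Matrix.conjTranspose_eq_transpose_of_trivial B ▸
      Matrix.posSemidef_self_mul_conjTranspose B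
    open scoped MatrixOrder in
    have h1 : matAbs B = cfc (fun x : ℝ => √x) (B * Bᵀ) := by
      rw [hP.1.cfc_eq]; rfl
    open scoped MatrixOrder in
    rw [h1, ← CFC.sqrt_unique (a := B * Bᵀ) (b := T) (by rw [← pow_two, hT2]) hT.nonneg,
      CFC.sqrt_eq_cfc, cfc_nnreal_eq_real _ _ hP.nonneg]
    exact cfc_congr (fun x _ => by
      simp only [Real.coe_sqrt, Real.coe_toNNReal']
      rcases le_total x 0 with h | h <;> simp [h, Real.sqrt_eq_zero_of_nonpos])
  have hDsub : diagonal (fun k => |d k| - d k)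
      = diagonal (fun k => |d k|) - diagonal d := by
    funext a b
    by_cases h : a = b <;> simp [diagonal, h]
  have hDadd : diagonal (fun k => |d k| + d k)
      = diagonal (fun k => |d k|) + diagonal d := by
    funext a b
    by_cases h : a = b <;> simp [diagonal, h]
  refine ⟨habs ▸ hT, ?_, ?_⟩
  · have e : matAbs B - B = U * diagonal (fun k => |d k| - d k) * star U := by
      rw [habs, hTdef, hspec, hDsub, Matrix.mul_sub, Matrix.sub_mul]
    rw [e]
    exact key _ fun k => sub_nonneg.mpr (le_abs_self _)
  · have e : matAbs B + B = U * diagonal (fun k => |d k| + d k) * star U := by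
      rw [habs, hTdef, hspec, hDadd, Matrix.mul_add, Matrix.add_mul]
    rw [e]
    exact key _ fun k => by linarith [neg_abs_le (d k)]

/-- Core arithmetic: the 2×2 minor inequalities for `|B| - B` and `|B| + B` imply both bounds. -/
lemma arith_key (a b x y c : ℝ) (d1 : 0 ≤ a - x) (d2 : 0 ≤ a + x) (d3 : 0 ≤ b - y)
    (d4 : 0 ≤ b + y) (h1 : (c + 1)^2 ≤ (a - x) * (b - y)) (h2 : (c - 1)^2 ≤ (a + x) * (b + y)) :
    1 ≤ a * b ∧ 2 ≤ a + b := by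
  constructor
  · have habxy : x * y ≤ a * b := by nlinarith [mul_nonneg d1 d4, mul_nonneg d2 d3]
    have h12 : (c + 1)^2 * ((c - 1)^2) ≤ ((a - x) * (b - y)) * ((a + x) * (b + y)) :=
      mul_le_mul h1 h2 (sq_nonneg _) (mul_nonneg d1 d3)
    have hsq : (1 - c^2)^2 ≤ (a * b - x * y)^2 := by nlinarith [h12, sq_nonneg (a*y - b*x)]
    have hkey : 1 - c^2 ≤ a * b - x * y :=
      sq_le_imp _ _ (by linarith) hsq
    nlinarith [h1, h2, hkey]
  · have k1 : c + 1 ≤ ((a - x) + (b - y)) / 2 := by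
      apply sq_le_imp _ _ (by linarith)
      nlinarith [sq_nonneg ((a - x) - (b - y))]
    have k2 : 1 - c ≤ ((a + x) + (b + y)) / 2 := by
      apply sq_le_imp _ _ (by linarith)
      nlinarith [sq_nonneg ((a + x) - (b + y))]
    linarith

theorem stmt8 {n : ℕ} (G : SimpleGraph (Fin n)) [DecidableRel G.Adj]
    (hconn : G.Connected) (i j : Fin n) (hadj : G.Adj i j) :
    vertexLapEnergy G i * vertexLapEnergy G j ≥ 1 ∧
      vertexLapEnergy G i + vertexLapEnergy G j ≥ 2 := by
  set B := G.lapMatrix ℝ - ((2 * (G.edgeFinset.card : ℝ)) / n) • (1 : Matrix (Fin n) (Fin n) ℝ)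
    with hBdef
  have hB : B.IsHermitian := by
    unfold Matrix.IsHermitian
    rw [conjTranspose_eq_transpose_of_trivial, hBdef, transpose_sub, transpose_smul,
      transpose_one,
      show (G.lapMatrix ℝ)ᵀ = G.lapMatrix ℝ from SimpleGraph.isSymm_lapMatrix (G := G) (R := ℝ)]
  have hne : i ≠ j := hadj.ne
  have hBij : B i j = -1 := by
    simp [hBdef, SimpleGraph.lapMatrix, SimpleGraph.degMatrix, Matrix.sub_apply,
      Matrix.smul_apply, Matrix.one_apply_ne hne, Matrix.diagonal_apply_ne _ hne, hadj]
  obtain ⟨hS, hP, hQ⟩ := matAbs_parts hB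
  set S := matAbs B with hSdef
  set a := S i i
  set b := S j j
  set x := B i i
  set y := B j j
  set c := S i j
  have d1 : 0 ≤ a - x := by simpa [Matrix.sub_apply] using psd_diag_nonneg hP i
  have d3 : 0 ≤ b - y := by simpa [Matrix.sub_apply] using psd_diag_nonneg hP j
  have d2 : 0 ≤ a + x := by simpa [Matrix.add_apply] using psd_diag_nonneg hQ i
  have d4 : 0 ≤ b + y := by simpa [Matrix.add_apply] using psd_diag_nonneg hQ j
  have h1 : (c + 1)^2 ≤ (a - x) * (b - y) := by
    have h := psd_entry_sq_le hP i j
    simp only [Matrix.sub_apply, hBij] at h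
    nlinarith [h]
  have h2 : (c - 1)^2 ≤ (a + x) * (b + y) := by
    have h := psd_entry_sq_le hQ i j
    simp only [Matrix.add_apply, hBij] at h
    nlinarith [h]
  obtain ⟨hprod, hsum⟩ := arith_key a b x y c d1 d2 d3 d4 h1 h2
  have hva : vertexLapEnergy G i = a := rfl
  have hvb : vertexLapEnergy G j = b := rfl
  constructor
  · rw [ge_iff_le, hva, hvb]; exact hprod
  · rw [ge_iff_le, hva, hvb]; exact hsum
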